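/- Let Θ be a p×p correlation matrix with smallest eigenvalue λ_p, and let α ∈ ℝ^p with α_m = min_j |α_j| and α_M = max_j |α_j|. If λ_p ≥ (α_M² − 1)/α_m² (with α_m > 0), then the matrix g(Θ,α) defined by g_{ij} = Θ_{ij} α_i α_j for i ≠ j and g_{ii} = 1 is positive semi-definite. -/

import Mathlib

open Matrix

/-- Multiplicative link: off-diagonal Θ_{ij} α_i α_j, diagonal 1. -/
theorem multiplicative_link_posSemidef {p : ℕ}
    (Θ : Matrix (Fin p) (Fin p) ℝ) (hΘ : Θ.PosSemidef)
    (hdiag : ∀ i, Θ i i = 1)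
    (lam : ℝ) (hlam : ∀ x : Fin p → ℝ, lam * (x ⬝ᵥ x) ≤ x ⬝ᵥ Θ.mulVec x)
    (α : Fin p → ℝ) (αm αM : ℝ) (hαm : 0 < αm)
    (hm : ∀ j, αm ≤ |α j|) (hM : ∀ j, |α j| ≤ αM)
    (hcond : lam ≥ (αM ^ 2 - 1) / αm ^ 2) :
    (Matrix.of (fun i j => if i = j then (1 : ℝ) else Θ i j * α i * α j)).PosSemidef := by
  set μ : ℝ := max lam 0 with hμdef
  have hμ0 : 0 ≤ μ := le_max_right _ _
  have hμlam : lam ≤ μ := le_max_left _ _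
  -- Θ - μ • 1 is PSD
  have hsub : (Θ - μ • (1 : Matrix (Fin p) (Fin p) ℝ)).PosSemidef := by
    rcases le_total lam 0 with h | h
    · have : μ = 0 := max_eq_right h
      simpa [this] using hΘ
    · have hμ : μ = lam := max_eq_left h
      refine Matrix.PosSemidef.of_dotProduct_mulVec_nonneg ?_ ?_
      · have hT : Θᵀ = Θ := (by simpa using hΘ.1 : Θ.IsSymm)
        unfold Matrix.IsHermitian
        simp [Matrix.conjTranspose_sub, Matrix.conjTranspose_smul, hT]
      · intro x
        have h1 := hlam x
        have hx : (star x : Fin p → ℝ) = x := funext fun i => star_trivial _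
        have hq : x ⬝ᵥ (Θ - μ • (1 : Matrix (Fin p) (Fin p) ℝ)).mulVec x
            = x ⬝ᵥ Θ.mulVec x - μ * (x ⬝ᵥ x) := by
          simp [Matrix.sub_mulVec, Matrix.smul_mulVec, dotProduct_sub,
            dotProduct_smul, smul_eq_mul]
        rw [hx, hq, hμ]
        linarith
  -- entrywise bound on α
  have hsq : ∀ i, αm ^ 2 ≤ α i ^ 2 ∧ α i ^ 2 ≤ αM ^ 2 := by
    intro i
    constructor
    · calc αm ^ 2 ≤ |α i| ^ 2 := by
            exact pow_le_pow_left₀ hαm.le (hm i) 2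
        _ = α i ^ 2 := sq_abs _
    · calc α i ^ 2 = |α i| ^ 2 := (sq_abs _).symm
        _ ≤ αM ^ 2 := pow_le_pow_left₀ (abs_nonneg _) (hM i) 2
  have hαm2 : (0:ℝ) < αm ^ 2 := pow_pos hαm 2
  have hc : αM ^ 2 - 1 ≤ μ * αm ^ 2 := by
    have := (div_le_iff₀ hαm2).mp (le_trans hcond hμlam)
    linarith
  have hdnn : ∀ i, 0 ≤ μ * α i ^ 2 + 1 - α i ^ 2 := by
    intro i
    obtain ⟨h1, h2⟩ := hsq i
    nlinarith [mul_le_mul_of_nonneg_left h1 hμ0]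
  have hdiagPSD : (Matrix.diagonal (fun i => μ * α i ^ 2 + 1 - α i ^ 2)).PosSemidef :=
    Matrix.posSemidef_diagonal_iff.mpr hdnn
  have hDD : ((Matrix.diagonal α)ᴴ * (Θ - μ • 1) * Matrix.diagonal α).PosSemidef :=
    hsub.conjTranspose_mul_mul_same _
  have hsum := hDD.add hdiagPSD
  have heq : (Matrix.of (fun i j => if i = j then (1 : ℝ) else Θ i j * α i * α j))
      = (Matrix.diagonal α)ᴴ * (Θ - μ • 1) * Matrix.diagonal α
        + Matrix.diagonal (fun i => μ * α i ^ 2 + 1 - α i ^ 2) := by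
    have hDH : (Matrix.diagonal α)ᴴ = Matrix.diagonal α := by
      simp [Matrix.diagonal_conjTranspose]
    ext i j
    rw [hDH]
    simp only [Matrix.of_apply, Matrix.add_apply, Matrix.mul_diagonal, Matrix.diagonal_mul,
      Matrix.sub_apply, Matrix.smul_apply, Matrix.one_apply, Matrix.diagonal_apply,
      smul_eq_mul]
    by_cases h : i = j
    · subst h
      rw [if_pos rfl, if_pos rfl, if_pos rfl, hdiag i]
      ring
    · rw [if_neg h, if_neg h, if_neg h]
      ring
  rw [heq]
  exact hsum
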